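/- Let B be a bicategory. If (α, β) : Γ₁ ⟶ Γ₂ and (ς, τ) : Λ₁ ⟶ Λ₂ are morphisms of wide right Morita contexts (Γᵢ from B to A, Λᵢ from C to B), then the pair (α ⊗ ς, τ ⊗ β) (horizontal composites of 2-cells) is a morphism of wide right Morita contexts Γ₁Λ₁ ⟶ Γ₂Λ₂, where ΓΛ denotes the product context (f ≫ p, q ≫ g, η ∗ γ, μ ∗ ρ). -/
import Mathlib


/-!
STATEMENT 6: The horizontal product of two morphisms of wide right Morita
contexts is a morphism between the product contexts.
-/

open CategoryTheory Bicategory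

/-- The two compatibility diagrams of a wide right Morita context (f, g, η, ρ). -/
def IsWRMC {B : Type*} [Bicategory B] {a b : B} (f : a ⟶ b) (g : b ⟶ a)
    (η : f ≫ g ⟶ 𝟙 a) (ρ : g ≫ f ⟶ 𝟙 b) : Prop :=
  ((ρ ▷ g) ≫ (λ_ g).hom = (α_ g f g).hom ≫ (g ◁ η) ≫ (ρ_ g).hom) ∧
  ((α_ f g f).hom ≫ (f ◁ ρ) ≫ (ρ_ f).hom = (η ▷ f) ≫ (λ_ f).hom)

/-- Horizontal composite of 2-cells. -/
def hcomp {B : Type*} [Bicategory B] {a b c : B} {f f' : a ⟶ b} {g g' : b ⟶ c}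
    (u : f ⟶ f') (v : g ⟶ g') : f ≫ g ⟶ f' ≫ g' :=
  (u ▷ g) ≫ (f' ◁ v)

/-- A morphism of wide right Morita contexts (f,g,η,ρ) ⟶ (f',g',η',ρ'). -/
def IsWRMCHom {B : Type*} [Bicategory B] {a b : B} {f f' : a ⟶ b} {g g' : b ⟶ a}
    (η : f ≫ g ⟶ 𝟙 a) (ρ : g ≫ f ⟶ 𝟙 b)
    (η' : f' ≫ g' ⟶ 𝟙 a) (ρ' : g' ≫ f' ⟶ 𝟙 b)
    (u : f ⟶ f') (v : g ⟶ g') : Prop :=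
  (hcomp u v ≫ η' = η) ∧ (hcomp v u ≫ ρ' = ρ)

/-- The 2-cell `η ∗ γ` of the product context. -/
def star {B : Type*} [Bicategory B] {a b c : B} {f : a ⟶ b} {g : b ⟶ a}
    {p : b ⟶ c} {q : c ⟶ b} (η : f ≫ g ⟶ 𝟙 a) (γ : p ≫ q ⟶ 𝟙 b) :
    (f ≫ p) ≫ (q ≫ g) ⟶ 𝟙 a :=
  (α_ f p (q ≫ g)).hom ≫ (f ◁ (α_ p q g).inv) ≫ (f ◁ (γ ▷ g)) ≫
    (f ◁ (λ_ g).hom) ≫ η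

lemma wideMorita_aux {B : Type*} [Bicategory B] {a b c : B}
    {f₁ f₂ : a ⟶ b} {g₁ g₂ : b ⟶ a} {p₁ p₂ : b ⟶ c} {q₁ q₂ : c ⟶ b}
    {η₁ : f₁ ≫ g₁ ⟶ 𝟙 a} {η₂ : f₂ ≫ g₂ ⟶ 𝟙 a}
    {γ₁ : p₁ ≫ q₁ ⟶ 𝟙 b} {γ₂ : p₂ ≫ q₂ ⟶ 𝟙 b}
    (u : f₁ ⟶ f₂) (v : g₁ ⟶ g₂) (s : p₁ ⟶ p₂) (t : q₁ ⟶ q₂)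
    (hη : hcomp u v ≫ η₂ = η₁) (hγ : hcomp s t ≫ γ₂ = γ₁) :
    hcomp (hcomp u s) (hcomp t v) ≫ _root_.star η₂ γ₂ = _root_.star η₁ γ₁ := by
  have key : hcomp s (hcomp t v) ≫ ((α_ p₂ q₂ g₂).inv ≫ (γ₂ ▷ g₂) ≫ (λ_ g₂).hom) =
      ((α_ p₁ q₁ g₁).inv ≫ (γ₁ ▷ g₁) ≫ (λ_ g₁).hom) ≫ v := by
    rw [← hγ]
    simp only [hcomp, Bicategory.whiskerLeft_comp, Category.assoc]
    rw [associator_inv_naturality_right_assoc, whisker_exchange_assoc,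
      leftUnitor_naturality]
    bicategory
  calc hcomp (hcomp u s) (hcomp t v) ≫ _root_.star η₂ γ₂
      = (α_ f₁ p₁ (q₁ ≫ g₁)).hom ≫ hcomp u (hcomp s (hcomp t v)) ≫
          (f₂ ◁ ((α_ p₂ q₂ g₂).inv ≫ (γ₂ ▷ g₂) ≫ (λ_ g₂).hom)) ≫ η₂ := by
        simp only [_root_.star, hcomp]
        bicategory
    _ = (α_ f₁ p₁ (q₁ ≫ g₁)).hom ≫ (u ▷ _) ≫
          (f₂ ◁ (hcomp s (hcomp t v) ≫ (α_ p₂ q₂ g₂).inv ≫ (γ₂ ▷ g₂) ≫ (λ_ g₂).hom)) ≫ η₂ := by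
        simp [hcomp]
    _ = (α_ f₁ p₁ (q₁ ≫ g₁)).hom ≫ (u ▷ _) ≫
          (f₂ ◁ (((α_ p₁ q₁ g₁).inv ≫ (γ₁ ▷ g₁) ≫ (λ_ g₁).hom) ≫ v)) ≫ η₂ := by
        rw [key]
    _ = (α_ f₁ p₁ (q₁ ≫ g₁)).hom ≫
          (f₁ ◁ ((α_ p₁ q₁ g₁).inv ≫ (γ₁ ▷ g₁) ≫ (λ_ g₁).hom)) ≫
          (u ▷ g₁) ≫ (f₂ ◁ v) ≫ η₂ := by
        simp only [Bicategory.whiskerLeft_comp, Category.assoc,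
          whisker_exchange_assoc, whisker_exchange]
    _ = _root_.star η₁ γ₁ := by
        rw [show (u ▷ g₁) ≫ (f₂ ◁ v) ≫ η₂ = η₁ by rw [← hη]; simp [hcomp]]
        simp [_root_.star]

theorem wideMorita_stmt6 {B : Type*} [Bicategory B] {a b c : B}
    {f₁ f₂ : a ⟶ b} {g₁ g₂ : b ⟶ a} {p₁ p₂ : b ⟶ c} {q₁ q₂ : c ⟶ b}
    (η₁ : f₁ ≫ g₁ ⟶ 𝟙 a) (ρ₁ : g₁ ≫ f₁ ⟶ 𝟙 b)
    (η₂ : f₂ ≫ g₂ ⟶ 𝟙 a) (ρ₂ : g₂ ≫ f₂ ⟶ 𝟙 b)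
    (γ₁ : p₁ ≫ q₁ ⟶ 𝟙 b) (μ₁ : q₁ ≫ p₁ ⟶ 𝟙 c)
    (γ₂ : p₂ ≫ q₂ ⟶ 𝟙 b) (μ₂ : q₂ ≫ p₂ ⟶ 𝟙 c)
    (hΓ₁ : IsWRMC f₁ g₁ η₁ ρ₁) (hΓ₂ : IsWRMC f₂ g₂ η₂ ρ₂)
    (hΛ₁ : IsWRMC p₁ q₁ γ₁ μ₁) (hΛ₂ : IsWRMC p₂ q₂ γ₂ μ₂)
    (u : f₁ ⟶ f₂) (v : g₁ ⟶ g₂) (s : p₁ ⟶ p₂) (t : q₁ ⟶ q₂)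
    (h₁ : IsWRMCHom η₁ ρ₁ η₂ ρ₂ u v) (h₂ : IsWRMCHom γ₁ μ₁ γ₂ μ₂ s t) :
    IsWRMCHom (star η₁ γ₁) (star μ₁ ρ₁) (star η₂ γ₂) (star μ₂ ρ₂)
      (hcomp u s) (hcomp t v) :=
  ⟨wideMorita_aux u v s t h₁.1 h₂.1, wideMorita_aux t s v u h₂.2 h₁.2⟩
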